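/- Let ε > 0, let T ≥ 1 be an integer, define τ_0 = 0 and τ_k = (1+ε)^{k−1} for 1 ≤ k ≤ T, and let X : {0,1,...,T} → [0,1] be nondecreasing with X(0) = 0 and X(T) = 1. Let X̂ : [0, τ_T] → [0,1] be the piecewise-linear interpolation of X with respect to the breakpoints τ_0 < ... < τ_T, and for λ ∈ (0,1] define C(λ) = inf { t ∈ [0, τ_T] : X̂(t) ≥ λ }. Then ∫_{0}^{1} 2λ·⌈C(λ)/λ⌉ dλ ≤ 2(1+ε)·(1 + ∑_{ρ=1}^{T-1} (τ_ρ − τ_{ρ−1})·(1 − X(ρ))). -/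

import Mathlib

open Finset intervalIntegral MeasureTheory

/-- The expected completion time of a coflow under the Stretch algorithm with
geometric time intervals: with breakpoints `τ 0 = 0`, `τ k = (1+ε)^(k-1)`,
`X : {0,...,T} → [0,1]` nondecreasing with `X 0 = 0`, `X T = 1`, `X̂` its
piecewise-linear interpolation with respect to these breakpoints, and
`C λ = inf { t ∈ [0, τ T] : X̂ t ≥ λ }`, the expected stretched completion time
`∫_0^1 2λ·⌈C(λ)/λ⌉ dλ` is at most
`2(1+ε)·(1 + ∑_{ρ=1}^{T-1} (τ ρ - τ (ρ-1)) (1 - X ρ))`. -/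
theorem stretch_geometric_two_plus_eps_approximation
    (ε : ℝ) (hε : 0 < ε) (T : ℕ) (hT : 1 ≤ T)
    (τ : ℕ → ℝ)
    (hτ : ∀ k, τ k = if k = 0 then 0 else (1 + ε) ^ (k - 1))
    (X : ℕ → ℝ)
    (hXmono : ∀ k k' : ℕ, k ≤ k' → k' ≤ T → X k ≤ X k')
    (hXrange : ∀ k : ℕ, k ≤ T → X k ∈ Set.Icc (0:ℝ) 1)
    (hX0 : X 0 = 0) (hXT : X T = 1)
    (Xhat : ℝ → ℝ)
    (hXhat : ∀ ρ : ℕ, 1 ≤ ρ → ρ ≤ T → ∀ t ∈ Set.Icc (τ (ρ - 1)) (τ ρ),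
      Xhat t = X (ρ - 1) + ((t - τ (ρ - 1)) / (τ ρ - τ (ρ - 1))) * (X ρ - X (ρ - 1)))
    (C : ℝ → ℝ)
    (hC : ∀ lam ∈ Set.Ioc (0:ℝ) 1,
      C lam = sInf {t : ℝ | t ∈ Set.Icc 0 (τ T) ∧ lam ≤ Xhat t}) :
    ∫ lam in (0:ℝ)..1, 2 * lam * (⌈C lam / lam⌉ : ℝ)
      ≤ 2 * (1 + ε) *
          (1 + ∑ ρ ∈ Finset.Icc 1 (T - 1), (τ ρ - τ (ρ - 1)) * (1 - X ρ)) := by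
  -- basic facts about τ
  have hτ0 : τ 0 = 0 := by simp [hτ]
  have hτs : ∀ k : ℕ, τ (k + 1) = (1 + ε) ^ k := by intro k; simp [hτ]
  have hone : (1:ℝ) ≤ 1 + ε := by linarith
  have hpos : (0:ℝ) < 1 + ε := by linarith
  have hτlt : ∀ k, τ k < τ (k + 1) := by
    intro k
    cases k with
    | zero => rw [hτ0, hτs]; norm_num
    | succ n =>
        rw [hτs, hτs, pow_succ]
        nlinarith [pow_pos hpos n]
  have hτmono : Monotone τ := monotone_nat_of_le_succ fun k => (hτlt k).le
  have hτnonneg : ∀ k, 0 ≤ τ k := fun k => hτ0 ▸ hτmono (Nat.zero_le k)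
  -- values of Xhat at breakpoints
  have hXhatτ : ∀ k : ℕ, k ≤ T → Xhat (τ k) = X k := by
    intro k hk
    cases k with
    | zero =>
        have h1 := hXhat 1 le_rfl hT (τ 0) ⟨by norm_num, (hτlt 0).le⟩
        simpa using h1
    | succ n =>
        have hd : τ (n + 1) - τ n ≠ 0 := ne_of_gt (by linarith [hτlt n])
        have h1 := hXhat (n + 1) (Nat.succ_le_succ (Nat.zero_le n)) hk (τ (n + 1))
          ⟨by simpa using (hτlt n).le, le_rfl⟩
        simp only [Nat.add_sub_cancel] at h1
        rw [h1, div_self hd]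
        ring
  -- the monotone completion-time function G
  set G : ℝ → ℝ := fun l => sInf {t : ℝ | t ∈ Set.Icc 0 (τ T) ∧ min l 1 ≤ Xhat t} with hGdef
  have hτTmem : ∀ l : ℝ, τ T ∈ {t : ℝ | t ∈ Set.Icc 0 (τ T) ∧ min l 1 ≤ Xhat t} := by
    intro l
    refine ⟨⟨hτnonneg T, le_rfl⟩, ?_⟩
    rw [hXhatτ T le_rfl, hXT]; exact min_le_right _ _
  have hne : ∀ l : ℝ, {t : ℝ | t ∈ Set.Icc 0 (τ T) ∧ min l 1 ≤ Xhat t}.Nonempty :=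
    fun l => ⟨τ T, hτTmem l⟩
  have hbdd : ∀ l : ℝ, BddBelow {t : ℝ | t ∈ Set.Icc 0 (τ T) ∧ min l 1 ≤ Xhat t} :=
    fun l => ⟨0, fun t ht => ht.1.1⟩
  have hCG : ∀ l ∈ Set.Ioc (0:ℝ) 1, C l = G l := by
    intro l hl
    rw [hC l hl, hGdef]
    congr 1
    ext t
    simp [min_eq_left hl.2]
  have hGmono : Monotone G := by
    intro a b hab
    exact csInf_le_csInf (hbdd a) (hne b)
      (fun t ht => ⟨ht.1, le_trans (min_le_min hab le_rfl) ht.2⟩)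
  have hGnonneg : ∀ l, 0 ≤ G l := fun l => le_csInf (hne l) fun t ht => ht.1.1
  have hGleτT : ∀ l, G l ≤ τ T := fun l => csInf_le (hbdd l) (hτTmem l)
  have hGle : ∀ k : ℕ, k ≤ T → ∀ l : ℝ, l ≤ X k → G l ≤ τ k := by
    intro k hk l hl
    refine csInf_le (hbdd l) ⟨⟨hτnonneg k, hτmono hk⟩, ?_⟩
    rw [hXhatτ k hk]
    exact le_trans (min_le_left _ _) hl
  -- key linear upper bound for G on each interval
  have hkey : ∀ i : ℕ, i < T → X i < X (i + 1) →
      ∀ l ∈ Set.Icc (X i) (X (i + 1)),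
        G l ≤ τ i + (τ (i + 1) - τ i) / (X (i + 1) - X i) * (l - X i) := by
    intro i hi hΔ l hl
    have hΔτ : 0 < τ (i + 1) - τ i := by linarith [hτlt i]
    have hΔX : 0 < X (i + 1) - X i := by linarith
    have hc : 0 ≤ (τ (i + 1) - τ i) / (X (i + 1) - X i) := (div_pos hΔτ hΔX).le
    have hXi1le1 : X (i + 1) ≤ 1 := (hXrange (i + 1) hi).2
    rcases eq_or_lt_of_le hl.1 with heq | hlt
    · have h1 := hGle i hi.le l (le_of_eq heq.symm)
      have h2 : 0 ≤ (τ (i + 1) - τ i) / (X (i + 1) - X i) * (l - X i) :=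
        mul_nonneg hc (by linarith [hl.1])
      linarith
    · set t0 : ℝ := τ i + (τ (i + 1) - τ i) / (X (i + 1) - X i) * (l - X i) with ht0
      have ht0ge : τ i ≤ t0 := by
        have : 0 ≤ (τ (i + 1) - τ i) / (X (i + 1) - X i) * (l - X i) :=
          mul_nonneg hc (by linarith)
        rw [ht0]; linarith
      have ht0le : t0 ≤ τ (i + 1) := by
        have h1 : (τ (i + 1) - τ i) / (X (i + 1) - X i) * (l - X i)
            = (τ (i + 1) - τ i) * ((l - X i) / (X (i + 1) - X i)) := by ring
        have h2 : (l - X i) / (X (i + 1) - X i) ≤ 1 := by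
          rw [div_le_one hΔX]; linarith [hl.2]
        have h3 : (τ (i + 1) - τ i) * ((l - X i) / (X (i + 1) - X i))
            ≤ (τ (i + 1) - τ i) * 1 := mul_le_mul_of_nonneg_left h2 hΔτ.le
        rw [ht0, h1]; linarith
      have hXt0 : Xhat t0 = l := by
        have hx := hXhat (i + 1) (Nat.succ_le_succ (Nat.zero_le i)) hi t0 (by
          simp only [Nat.add_sub_cancel]
          exact ⟨ht0ge, ht0le⟩)
        simp only [Nat.add_sub_cancel] at hx
        rw [hx, ht0]
        field_simp
        ring
      refine csInf_le (hbdd l) ⟨⟨by linarith [hτnonneg i], le_trans ht0le (hτmono hi)⟩, ?_⟩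
      rw [hXt0]
      exact min_le_left _ _
  -- split T = T' + 1
  obtain ⟨T', rfl⟩ : ∃ T', T = T' + 1 := ⟨T - 1, by omega⟩
  simp only [Nat.add_sub_cancel]
  set S : ℝ := ∑ ρ ∈ Finset.Icc 1 T', (τ ρ - τ (ρ - 1)) * (1 - X ρ) with hSdef
  have hS0 : 0 ≤ S := by
    refine Finset.sum_nonneg fun ρ hρ => ?_
    rw [Finset.mem_Icc] at hρ
    have h1 : τ (ρ - 1) ≤ τ ρ := hτmono (Nat.sub_le ρ 1)
    have h2 : X ρ ≤ 1 := (hXrange ρ (by omega)).2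
    exact mul_nonneg (by linarith) (by linarith)
  -- per-piece integral bound
  have hpiece : ∀ i ∈ Finset.range (T' + 1), ∫ l in (X i)..(X (i + 1)), G l
      ≤ (X (i + 1) - X i) * (τ i + τ (i + 1)) / 2 := by
    intro i hi
    rw [Finset.mem_range] at hi
    have hle : X i ≤ X (i + 1) := hXmono i (i + 1) (Nat.le_succ i) hi
    rcases eq_or_lt_of_le hle with heq | hlt
    · rw [← heq]
      simp
    · have hΔX : 0 < X (i + 1) - X i := by linarith
      set c : ℝ := (τ (i + 1) - τ i) / (X (i + 1) - X i) with hc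
      have hLint : IntervalIntegrable (fun l => (τ i - c * X i) + c * l) volume (X i) (X (i + 1)) :=
        ((continuous_const.add (continuous_const.mul continuous_id)).intervalIntegrable _ _)
      have hmono_bound : ∀ l ∈ Set.Icc (X i) (X (i + 1)),
          G l ≤ (τ i - c * X i) + c * l := by
        intro l hl
        have := hkey i hi hlt l hl
        rw [← hc] at this
        linarith [this]
      have hcomp : ∫ l in (X i)..(X (i + 1)), G l
          ≤ ∫ l in (X i)..(X (i + 1)), ((τ i - c * X i) + c * l) :=
        intervalIntegral.integral_mono_on hle hGmono.intervalIntegrable hLint hmono_bound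
      have hval : ∫ l in (X i)..(X (i + 1)), ((τ i - c * X i) + c * l)
          = (X (i + 1) - X i) * (τ i + τ (i + 1)) / 2 := by
        rw [intervalIntegral.integral_add intervalIntegrable_const
            (intervalIntegrable_id.const_mul c),
          intervalIntegral.integral_const, intervalIntegral.integral_const_mul, integral_id]
        rw [hc, smul_eq_mul]
        field_simp
        ring
      linarith [hcomp, hval.symm.le]
  -- the sum of the interval integrals
  have hsplit : ∫ l in (0:ℝ)..1, G l
      = ∑ i ∈ Finset.range (T' + 1), ∫ l in (X i)..(X (i + 1)), G l := by
    have h := intervalIntegral.sum_integral_adjacent_intervals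
      (a := X) (n := T' + 1) (μ := volume) (f := G)
      (fun k _ => hGmono.intervalIntegrable)
    rw [hX0, hXT] at h
    exact h.symm
  have hGint01 : ∫ l in (0:ℝ)..1, G l
      ≤ (∑ i ∈ Finset.range (T' + 1), (X (i + 1) - X i) * (τ i + τ (i + 1))) / 2 := by
    rw [hsplit, Finset.sum_div]
    exact Finset.sum_le_sum (by
      intro i hi
      have := hpiece i hi
      linarith [this])
  -- Abel-type rearrangement of the trapezoid sum
  have htel : ∑ i ∈ Finset.range (T' + 1),
      ((X (i + 1) - 1) * τ (i + 1) - (X i - 1) * τ i)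
      = (X (T' + 1) - 1) * τ (T' + 1) - (X 0 - 1) * τ 0 :=
    Finset.sum_range_sub (fun k => (X k - 1) * τ k) (T' + 1)
  have htel0 : ∑ i ∈ Finset.range (T' + 1),
      ((X (i + 1) - 1) * τ (i + 1) - (X i - 1) * τ i) = 0 := by
    rw [htel, hXT, hX0, hτ0]; ring
  have hA : ∑ i ∈ Finset.range (T' + 1), (X (i + 1) - X i) * (τ i + τ (i + 1))
      = ∑ i ∈ Finset.range (T' + 1), (τ (i + 1) - τ i) * (1 - X i)
        + ∑ i ∈ Finset.range (T' + 1), (τ (i + 1) - τ i) * (1 - X (i + 1)) := by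
    have h2 : ∀ i ∈ Finset.range (T' + 1), (X (i + 1) - X i) * (τ i + τ (i + 1))
        = ((τ (i + 1) - τ i) * (1 - X i) + (τ (i + 1) - τ i) * (1 - X (i + 1)))
          + 2 * ((X (i + 1) - 1) * τ (i + 1) - (X i - 1) * τ i) := fun i _ => by ring
    rw [Finset.sum_congr rfl h2, Finset.sum_add_distrib, ← Finset.mul_sum, htel0,
      Finset.sum_add_distrib]
    ring
  -- identify the second sum with S
  have hIcc : Finset.Icc 1 T' = Finset.Ico 1 (T' + 1) := by
    rw [Finset.Ico_add_one_right_eq_Icc]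
  have hS2 : ∑ i ∈ Finset.range (T' + 1), (τ (i + 1) - τ i) * (1 - X (i + 1)) = S := by
    rw [hSdef, hIcc, Finset.sum_Ico_eq_sum_range]
    simp only [Nat.add_sub_cancel]
    rw [Finset.sum_range_succ]
    rw [hXT]
    simp only [sub_self, mul_zero, add_zero]
    refine Finset.sum_congr rfl fun i _ => ?_
    have h1 : 1 + i - 1 = i := by omega
    rw [h1, Nat.add_comm 1 i]
  -- bound the first sum
  have hSrange : S = ∑ i ∈ Finset.range T', (τ (i + 1) - τ i) * (1 - X (i + 1)) := by
    rw [hSdef, hIcc, Finset.sum_Ico_eq_sum_range]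
    simp only [Nat.add_sub_cancel]
    refine Finset.sum_congr rfl fun i _ => ?_
    have h1 : 1 + i - 1 = i := by omega
    rw [h1, Nat.add_comm 1 i]
  have hB : ∑ i ∈ Finset.range (T' + 1), (τ (i + 1) - τ i) * (1 - X i)
      ≤ 1 + (1 + ε) * S := by
    rw [Finset.sum_range_succ']
    have h0 : (τ (0 + 1) - τ 0) * (1 - X 0) = 1 := by
      rw [hX0, hτ0, hτs 0]; ring
    rw [h0]
    have hterm : ∀ i ∈ Finset.range T', (τ (i + 1 + 1) - τ (i + 1)) * (1 - X (i + 1))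
        ≤ (1 + ε) * ((τ (i + 1) - τ i) * (1 - X (i + 1))) := by
      intro i hi
      rw [Finset.mem_range] at hi
      have hXn : 0 ≤ 1 - X (i + 1) := by linarith [(hXrange (i + 1) (by omega)).2]
      have hτstep : τ (i + 1 + 1) - τ (i + 1) ≤ (1 + ε) * (τ (i + 1) - τ i) := by
        cases i with
        | zero =>
            rw [hτ0, hτs 0, hτs 1]
            nlinarith
        | succ n =>
            rw [hτs (n + 1 + 1), hτs (n + 1), hτs n]
            have : (1 + ε) ^ (n + 1 + 1) = (1 + ε) ^ n * (1 + ε) * (1 + ε) := by ring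
            rw [this, pow_succ]
            ring_nf
            nlinarith [pow_pos hpos n]
      calc (τ (i + 1 + 1) - τ (i + 1)) * (1 - X (i + 1))
          ≤ ((1 + ε) * (τ (i + 1) - τ i)) * (1 - X (i + 1)) :=
            mul_le_mul_of_nonneg_right hτstep hXn
        _ = (1 + ε) * ((τ (i + 1) - τ i) * (1 - X (i + 1))) := by ring
    have hsum : ∑ i ∈ Finset.range T', (τ (i + 1 + 1) - τ (i + 1)) * (1 - X (i + 1))
        ≤ (1 + ε) * S := by
      rw [hSrange, Finset.mul_sum]
      exact Finset.sum_le_sum hterm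
    linarith
  -- combine the algebraic bounds
  have hAsum : ∑ i ∈ Finset.range (T' + 1), (X (i + 1) - X i) * (τ i + τ (i + 1))
      ≤ 1 + (1 + ε) * S + S := by
    rw [hA, hS2]; linarith
  -- integral comparison steps
  have hIoc : ∫ lam in (0:ℝ)..1, 2 * lam * (⌈C lam / lam⌉ : ℝ)
      = ∫ lam in Set.Ioc (0:ℝ) 1, 2 * lam * (⌈G lam / lam⌉ : ℝ) := by
    rw [intervalIntegral.integral_of_le zero_le_one]
    exact setIntegral_congr_fun measurableSet_Ioc fun l hl => by rw [hCG l hl]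
  have hGmeas : Measurable G := hGmono.measurable
  have hfmeas : Measurable fun l : ℝ => 2 * l * (⌈G l / l⌉ : ℝ) := by
    apply (measurable_const.mul measurable_id).mul
    exact measurable_from_top.comp ((hGmeas.div measurable_id).ceil)
  have hbound : ∀ l ∈ Set.Ioc (0:ℝ) 1,
      2 * l * (⌈G l / l⌉ : ℝ) ≤ 2 * G l + 2 * l := by
    intro l hl
    have hl0 : 0 < l := hl.1
    have h1 : (⌈G l / l⌉ : ℝ) < G l / l + 1 := Int.ceil_lt_add_one _
    have h2 : 2 * l * (⌈G l / l⌉ : ℝ) ≤ 2 * l * (G l / l + 1) :=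
      mul_le_mul_of_nonneg_left h1.le (by linarith)
    have h3 : 2 * l * (G l / l + 1) = 2 * G l + 2 * l := by
      field_simp
    linarith
  have hfnonneg : ∀ l ∈ Set.Ioc (0:ℝ) 1, 0 ≤ 2 * l * (⌈G l / l⌉ : ℝ) := by
    intro l hl
    have h1 : (0:ℝ) ≤ (⌈G l / l⌉ : ℝ) := by
      exact_mod_cast Int.ceil_nonneg (div_nonneg (hGnonneg l) hl.1.le)
    exact mul_nonneg (by linarith [hl.1]) h1
  have hGIoc : IntegrableOn G (Set.Ioc (0:ℝ) 1) volume := by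
    rw [← intervalIntegrable_iff_integrableOn_Ioc_of_le zero_le_one]
    exact hGmono.intervalIntegrable
  have hgint : IntegrableOn (fun l => 2 * G l + 2 * l) (Set.Ioc (0:ℝ) 1) volume := by
    apply Integrable.add
    · exact hGIoc.const_mul 2
    · exact (continuous_const.mul continuous_id' : Continuous fun l : ℝ => 2 * l).integrableOn_Ioc
  have hfint : IntegrableOn (fun l => 2 * l * (⌈G l / l⌉ : ℝ)) (Set.Ioc (0:ℝ) 1) volume := by
    apply Integrable.mono' hgint (hfmeas.aestronglyMeasurable.restrict)
    filter_upwards [ae_restrict_mem measurableSet_Ioc] with l hl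
    rw [Real.norm_eq_abs, abs_of_nonneg (hfnonneg l hl)]
    exact hbound l hl
  have hstep1 : ∫ l in Set.Ioc (0:ℝ) 1, 2 * l * (⌈G l / l⌉ : ℝ)
      ≤ ∫ l in Set.Ioc (0:ℝ) 1, (2 * G l + 2 * l) :=
    setIntegral_mono_on hfint hgint measurableSet_Ioc hbound
  have hstep2 : ∫ l in Set.Ioc (0:ℝ) 1, (2 * G l + 2 * l)
      = 2 * (∫ l in (0:ℝ)..1, G l) + 1 := by
    rw [← intervalIntegral.integral_of_le zero_le_one]
    rw [intervalIntegral.integral_add (g := fun l : ℝ => 2 * l) (hGmono.intervalIntegrable.const_mul 2)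
      ((continuous_const.mul continuous_id' : Continuous fun l : ℝ => 2 * l).intervalIntegrable _ _)]
    have h1 : ∫ l in (0:ℝ)..1, 2 * G l = 2 * ∫ l in (0:ℝ)..1, G l :=
      intervalIntegral.integral_const_mul 2 G
    have h2 : ∫ l in (0:ℝ)..1, 2 * l = 1 := by
      rw [intervalIntegral.integral_const_mul 2 (fun l : ℝ => l), integral_id]
      norm_num
    rw [h1, h2]
  -- finish
  rw [hIoc]
  have hfin1 : 2 * (∫ l in (0:ℝ)..1, G l) + 1 ≤ 2 + (2 + ε) * S := by
    have := hGint01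
    nlinarith [hAsum]
  have hfin2 : 2 + (2 + ε) * S ≤ 2 * (1 + ε) * (1 + S) := by nlinarith
  calc ∫ l in Set.Ioc (0:ℝ) 1, 2 * l * (⌈G l / l⌉ : ℝ)
      ≤ ∫ l in Set.Ioc (0:ℝ) 1, (2 * G l + 2 * l) := hstep1
    _ = 2 * (∫ l in (0:ℝ)..1, G l) + 1 := hstep2
    _ ≤ 2 + (2 + ε) * S := hfin1
    _ ≤ 2 * (1 + ε) * (1 + S) := hfin2
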